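/- Let h ∈ Γ₀(ℝ^N), let P be a symmetric positive definite N×N matrix, let u₁,…,u_r ∈ ℝ^N be linearly independent (r ≤ N), U = (u₁,…,u_r) ∈ ℝ^{N×r}, Q = U U^T, and assume V = P − Q is symmetric positive definite. Then ‖P^{-1/2} U‖² < 1, and for every x ∈ ℝ^N the map L : ℝ^r → ℝ^r defined by L(α) = U^T( x − prox^P_h( x + P^{-1} U α ) ) + α is Lipschitz continuous with Lipschitz constant 1 + ‖P^{-1/2} U‖², strongly monotone with modulus c = 1 − ‖P^{-1/2} U‖² > 0 (i.e. ⟨L(α) − L(β), α − β⟩ ≥ c‖α − β‖² for all α, β ∈ ℝ^r), has a unique zero α* ∈ ℝ^r, and prox^V_h(x) = prox^P_h( x + P^{-1} U α* ). -/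

import Mathlib

open Matrix

noncomputable section

/-- Euclidean norm `‖x‖ = √⟨x,x⟩` on `ℝ^N` (inner product `⟨x,y⟩ = ∑ i, x i * y i`). -/
def euNorm {N : ℕ} (x : Fin N → ℝ) : ℝ := Real.sqrt (x ⬝ᵥ x)

/-- `p` is the proximal point of `h` at `x` in the metric induced by `V`, i.e. `p`
minimizes `z ↦ h z + (1/2)‖x - z‖²_V` (with `‖w‖²_V = ⟨w, V w⟩`). -/
def IsProxPt {N : ℕ} (V : Matrix (Fin N) (Fin N) ℝ) (h : (Fin N → ℝ) → EReal)
    (x p : Fin N → ℝ) : Prop :=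
  ∀ z : Fin N → ℝ,
    h p + ((1 / 2 * ((x - p) ⬝ᵥ (V *ᵥ (x - p))) : ℝ) : EReal) ≤
      h z + ((1 / 2 * ((x - z) ⬝ᵥ (V *ᵥ (x - z))) : ℝ) : EReal)

/-- `h` belongs to `Γ₀(ℝ^N)`: proper, never `-∞`, lower semicontinuous and convex. -/
def Gamma0 {N : ℕ} (h : (Fin N → ℝ) → EReal) : Prop :=
  (∃ z, h z ≠ ⊤) ∧ (∀ z, h z ≠ ⊥) ∧ LowerSemicontinuous h ∧
    ∀ x y : Fin N → ℝ, ∀ t : ℝ, 0 ≤ t → t ≤ 1 →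
      h (t • x + (1 - t) • y) ≤ (t : EReal) * h x + ((1 - t : ℝ) : EReal) * h y

/-- The ℓ²→ℓ² operator norm of a matrix. -/
def matOpNorm {m n : ℕ} (A : Matrix (Fin m) (Fin n) ℝ) : ℝ :=
  ‖LinearMap.toContinuousLinearMap (Matrix.toEuclideanLin A)‖

/- ### Auxiliary lemmas -/

abbrev toE {n : ℕ} (x : Fin n → ℝ) : EuclideanSpace ℝ (Fin n) := (WithLp.equiv 2 _).symm x

lemma normE {n : ℕ} (x : Fin n → ℝ) : ‖toE x‖ = euNorm x := by
  rw [EuclideanSpace.norm_eq, euNorm, dotProduct]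
  congr 1; apply Finset.sum_congr rfl; intro i _
  simp [WithLp.equiv, Real.norm_eq_abs, sq_abs, sq]

lemma euNorm_nonneg {n : ℕ} (x : Fin n → ℝ) : 0 ≤ euNorm x := Real.sqrt_nonneg _

lemma dot_self_nonneg {n : ℕ} (x : Fin n → ℝ) : 0 ≤ x ⬝ᵥ x := by
  apply Finset.sum_nonneg; intro i _; exact mul_self_nonneg _

lemma euNorm_sq {n : ℕ} (x : Fin n → ℝ) : euNorm x ^ 2 = x ⬝ᵥ x := by
  rw [euNorm, Real.sq_sqrt (dot_self_nonneg x)]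

lemma euNorm_triangle {n : ℕ} (x y : Fin n → ℝ) : euNorm (x + y) ≤ euNorm x + euNorm y := by
  rw [← normE, ← normE, ← normE]; exact norm_add_le (toE x) (toE y)

lemma dot_le_euNorm {n : ℕ} (x y : Fin n → ℝ) : x ⬝ᵥ y ≤ euNorm x * euNorm y := by
  have := real_inner_le_norm (toE x) (toE y)
  rw [normE, normE, PiLp.inner_apply] at this
  convert this using 1
  simp [dotProduct, mul_comm]

lemma mulVec_opNorm {m n : ℕ} (A : Matrix (Fin m) (Fin n) ℝ) (v : Fin n → ℝ) :
    euNorm (A *ᵥ v) ≤ matOpNorm A * euNorm v := by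
  have := (LinearMap.toContinuousLinearMap (Matrix.toEuclideanLin A)).le_opNorm (toE v)
  rw [LinearMap.coe_toContinuousLinearMap'] at this
  rw [← normE, ← normE]; exact this

lemma matOpNorm_nonneg {m n : ℕ} (A : Matrix (Fin m) (Fin n) ℝ) : 0 ≤ matOpNorm A :=
  norm_nonneg _

lemma dot_mulVec_swap {m n : ℕ} (A : Matrix (Fin m) (Fin n) ℝ) (x : Fin m → ℝ) (y : Fin n → ℝ) :
    x ⬝ᵥ (A *ᵥ y) = (Aᵀ *ᵥ x) ⬝ᵥ y := by
  rw [Matrix.dotProduct_mulVec, Matrix.mulVec_transpose]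

lemma transpose_mulVec_opNorm {m n : ℕ} (A : Matrix (Fin m) (Fin n) ℝ) (w : Fin m → ℝ) :
    euNorm (Aᵀ *ᵥ w) ≤ matOpNorm A * euNorm w := by
  set u := Aᵀ *ᵥ w with hu
  have h1 : u ⬝ᵥ u = (A *ᵥ u) ⬝ᵥ w := by
    rw [hu]; rw [← dot_mulVec_swap]
    rw [dotProduct_comm]
  have h2 : u ⬝ᵥ u ≤ matOpNorm A * euNorm u * euNorm w := by
    rw [h1]
    calc (A *ᵥ u) ⬝ᵥ w ≤ euNorm (A *ᵥ u) * euNorm w := dot_le_euNorm _ _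
    _ ≤ matOpNorm A * euNorm u * euNorm w := by
        apply mul_le_mul_of_nonneg_right (mulVec_opNorm A u) (euNorm_nonneg w)
  rcases eq_or_lt_of_le (euNorm_nonneg u) with h0 | h0
  · nlinarith [euNorm_nonneg u, euNorm_sq u, matOpNorm_nonneg A, euNorm_nonneg w]
  · have := euNorm_sq u
    nlinarith [euNorm_nonneg u]

lemma matOpNorm_attained {m n : ℕ} (hn : 0 < n) (A : Matrix (Fin m) (Fin n) ℝ) :
    ∃ v : Fin n → ℝ, euNorm v = 1 ∧ euNorm (A *ᵥ v) = matOpNorm A := by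
  set f := LinearMap.toContinuousLinearMap (Matrix.toEuclideanLin A) with hf
  have hsne : (Metric.sphere (0 : EuclideanSpace ℝ (Fin n)) 1).Nonempty := by
    refine ⟨EuclideanSpace.single ⟨0, hn⟩ (1:ℝ), ?_⟩
    simp [EuclideanSpace.norm_single]
  obtain ⟨v₀, hv₀mem, hmax⟩ := (isCompact_sphere (0 : EuclideanSpace ℝ (Fin n)) 1).exists_isMaxOn
    hsne (Continuous.norm f.continuous).continuousOn
  have hv₀ : ‖v₀‖ = 1 := by simpa using hv₀mem
  have hle : ‖f‖ ≤ ‖f v₀‖ := by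
    apply ContinuousLinearMap.opNorm_le_bound _ (norm_nonneg _)
    intro z
    rcases eq_or_ne z 0 with rfl | hz
    · simp
    · have hzn : ‖z‖ ≠ 0 := norm_ne_zero_iff.2 hz
      have : ‖z‖⁻¹ • z ∈ Metric.sphere (0 : EuclideanSpace ℝ (Fin n)) 1 := by
        simp [norm_smul, abs_inv, abs_of_nonneg (norm_nonneg z), inv_mul_cancel₀ hzn]
      have h2 : ‖f (‖z‖⁻¹ • z)‖ ≤ ‖f v₀‖ := hmax this
      rw [_root_.map_smul, norm_smul] at h2
      rw [Real.norm_eq_abs, abs_inv, abs_of_nonneg (norm_nonneg z)] at h2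
      calc ‖f z‖ = ‖z‖ * (‖z‖⁻¹ * ‖f z‖) := by field_simp
      _ ≤ ‖z‖ * ‖f v₀‖ := by
          apply mul_le_mul_of_nonneg_left h2 (norm_nonneg z)
      _ = ‖f v₀‖ * ‖z‖ := mul_comm _ _
  have hge : ‖f v₀‖ ≤ ‖f‖ := by
    calc ‖f v₀‖ ≤ ‖f‖ * ‖v₀‖ := f.le_opNorm v₀
    _ = ‖f‖ := by rw [hv₀, mul_one]
  refine ⟨WithLp.equiv 2 _ v₀, ?_, ?_⟩
  · rw [← normE]; exact hv₀
  · have happ : f v₀ = toE (A *ᵥ (WithLp.equiv 2 _ v₀)) := by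
      rw [hf, LinearMap.coe_toContinuousLinearMap', Matrix.toEuclideanLin_apply]
      rfl
    have : ‖f v₀‖ = euNorm (A *ᵥ (WithLp.equiv 2 _ v₀)) := by rw [happ, normE]
    rw [← this]; exact le_antisymm hge hle

lemma posdef_apply {N : ℕ} {M : Matrix (Fin N) (Fin N) ℝ} (hM : M.PosDef) {v : Fin N → ℝ}
    (hv : v ≠ 0) : 0 < v ⬝ᵥ (M *ᵥ v) := by
  have := hM.dotProduct_mulVec_pos hv; simpa using this

lemma possemidef_apply {N : ℕ} {M : Matrix (Fin N) (Fin N) ℝ} (hM : M.PosSemidef)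
    (v : Fin N → ℝ) : 0 ≤ v ⬝ᵥ (M *ᵥ v) := by
  have := hM.dotProduct_mulVec_nonneg v; simpa using this

lemma dot_symm {n : ℕ} (M : Matrix (Fin n) (Fin n) ℝ) (hM : Mᵀ = M) (a b : Fin n → ℝ) :
    a ⬝ᵥ (M *ᵥ b) = b ⬝ᵥ (M *ᵥ a) := by
  rw [dot_mulVec_swap, hM, dotProduct_comm]

lemma qform_sub {n : ℕ} (M : Matrix (Fin n) (Fin n) ℝ) (hM : Mᵀ = M) (a b : Fin n → ℝ)
    (t : ℝ) :
    (a - t • b) ⬝ᵥ (M *ᵥ (a - t • b)) =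
      a ⬝ᵥ (M *ᵥ a) - 2 * t * (a ⬝ᵥ (M *ᵥ b)) + t ^ 2 * (b ⬝ᵥ (M *ᵥ b)) := by
  have hba : b ⬝ᵥ (M *ᵥ a) = a ⬝ᵥ (M *ᵥ b) := dot_symm M hM b a
  simp only [Matrix.mulVec_sub, Matrix.mulVec_smul, dotProduct_sub,
    sub_dotProduct, dotProduct_smul, smul_dotProduct, smul_eq_mul]
  rw [hba]; ring

lemma prox_ne_top {N : ℕ} {h : (Fin N → ℝ) → EReal} (hh : Gamma0 h)
    {M : Matrix (Fin N) (Fin N) ℝ} {w p : Fin N → ℝ} (hp : IsProxPt M h w p) :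
    h p ≠ ⊤ := by
  obtain ⟨z₀, hz₀⟩ := hh.1
  intro htop
  have := hp z₀
  rw [htop] at this
  have hne : h z₀ + ((1 / 2 * ((w - z₀) ⬝ᵥ (M *ᵥ (w - z₀))) : ℝ) : EReal) ≠ ⊤ :=
    (EReal.add_lt_top hz₀ (EReal.coe_ne_top _)).ne
  rw [EReal.top_add_of_ne_bot (EReal.coe_ne_bot _)] at this
  exact hne (top_le_iff.mp this)

lemma prox_VI {N : ℕ} {h : (Fin N → ℝ) → EReal} (hh : Gamma0 h)
    {M : Matrix (Fin N) (Fin N) ℝ} (hM : Mᵀ = M)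
    (hMpsd : ∀ v : Fin N → ℝ, 0 ≤ v ⬝ᵥ (M *ᵥ v))
    {w p : Fin N → ℝ} (hp : IsProxPt M h w p)
    (z : Fin N → ℝ) (hz : h z ≠ ⊤) :
    (w - p) ⬝ᵥ (M *ᵥ (z - p)) ≤ (h z).toReal - (h p).toReal := by
  have hpt : h p ≠ ⊤ := prox_ne_top hh hp
  have hpb : h p ≠ ⊥ := hh.2.1 p
  have hzb : h z ≠ ⊥ := hh.2.1 z
  set a : ℝ := (h p).toReal with ha
  set b : ℝ := (h z).toReal with hb
  have hpa : h p = (a : EReal) := (EReal.coe_toReal hpt hpb).symm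
  have hza : h z = (b : EReal) := (EReal.coe_toReal hz hzb).symm
  set C : ℝ := (z - p) ⬝ᵥ (M *ᵥ (z - p)) with hC
  have hC0 : 0 ≤ C := hMpsd _
  have key : ∀ t : ℝ, 0 < t → t ≤ 1 →
      (w - p) ⬝ᵥ (M *ᵥ (z - p)) ≤ (b - a) + t / 2 * C := by
    intro t ht0 ht1
    have hmid : p + t • (z - p) = t • z + (1 - t) • p := by
      rw [smul_sub, sub_smul, one_smul]; abel
    have hconv := hh.2.2.2 z p t (le_of_lt ht0) ht1
    rw [hza, hpa] at hconv
    have hconv' : h (t • z + (1 - t) • p) ≤ ((t * b + (1 - t) * a : ℝ) : EReal) := by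
      rw [EReal.coe_add, EReal.coe_mul, EReal.coe_mul]
      exact hconv
    have hineq := hp (t • z + (1 - t) • p)
    rw [hpa] at hineq
    have hwm : w - (t • z + (1 - t) • p) = (w - p) - t • (z - p) := by
      rw [← hmid]; abel
    have hQmid : (w - (t • z + (1 - t) • p)) ⬝ᵥ (M *ᵥ (w - (t • z + (1 - t) • p))) =
        (w - p) ⬝ᵥ (M *ᵥ (w - p)) - 2 * t * ((w - p) ⬝ᵥ (M *ᵥ (z - p))) + t ^ 2 * C := by
      rw [hwm, qform_sub M hM]
    have hchain : ((a + 1 / 2 * ((w - p) ⬝ᵥ (M *ᵥ (w - p))) : ℝ) : EReal) ≤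
        (((t * b + (1 - t) * a) + 1 / 2 * ((w - (t • z + (1 - t) • p)) ⬝ᵥ (M *ᵥ (w - (t • z + (1 - t) • p)))) : ℝ) : EReal) := by
      rw [EReal.coe_add, EReal.coe_add]
      calc (a : EReal) + _ ≤ h (t • z + (1 - t) • p) +
            ((1 / 2 * ((w - (t • z + (1 - t) • p)) ⬝ᵥ (M *ᵥ (w - (t • z + (1 - t) • p)))) : ℝ) : EReal) := hineq
      _ ≤ _ := add_le_add_left hconv' _
    rw [EReal.coe_le_coe_iff] at hchain
    rw [hQmid] at hchain
    have h2 : (w - p) ⬝ᵥ (M *ᵥ (z - p)) ≤ (b - a) + t / 2 * C := by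
      have hgoal : t * ((w - p) ⬝ᵥ (M *ᵥ (z - p))) ≤ t * ((b - a) + t / 2 * C) := by
        nlinarith
      exact le_of_mul_le_mul_left hgoal ht0
    exact h2
  apply le_of_forall_pos_le_add
  intro ε hε
  have htle : min 1 (ε / (C + 1)) ≤ 1 := min_le_left _ _
  have ht0 : 0 < min 1 (ε / (C + 1)) := by
    apply lt_min one_pos
    positivity
  calc (w - p) ⬝ᵥ (M *ᵥ (z - p)) ≤ (b - a) + (min 1 (ε / (C + 1))) / 2 * C := key _ ht0 htle
  _ ≤ (b - a) + ε := by
      have h1 : (min 1 (ε / (C + 1))) / 2 * C ≤ ε := by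
        have h2 : min 1 (ε / (C + 1)) ≤ ε / (C + 1) := min_le_right _ _
        have h3 : (min 1 (ε / (C + 1))) * C ≤ (ε / (C + 1)) * C := by
          apply mul_le_mul_of_nonneg_right h2 hC0
        have h4 : (ε / (C + 1)) * C ≤ ε := by
          rw [div_mul_eq_mul_div, div_le_iff₀ (by linarith)]
          nlinarith
        nlinarith
      linarith

lemma VI_prox {N : ℕ} {h : (Fin N → ℝ) → EReal}
    (hbot : ∀ z, h z ≠ ⊥)
    {M : Matrix (Fin N) (Fin N) ℝ} (hM : Mᵀ = M)
    (hMpsd : ∀ v : Fin N → ℝ, 0 ≤ v ⬝ᵥ (M *ᵥ v))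
    {x p : Fin N → ℝ} (hfin : h p ≠ ⊤)
    (hVI : ∀ z, h z ≠ ⊤ → (x - p) ⬝ᵥ (M *ᵥ (z - p)) ≤ (h z).toReal - (h p).toReal) :
    IsProxPt M h x p := by
  intro z
  rcases eq_or_ne (h z) ⊤ with hz | hz
  · rw [hz, EReal.top_add_of_ne_bot (EReal.coe_ne_bot _)]
    exact le_top
  · have ha := (EReal.coe_toReal hfin (hbot p)).symm
    have hb := (EReal.coe_toReal hz (hbot z)).symm
    set a : ℝ := (h p).toReal
    set b : ℝ := (h z).toReal
    rw [ha, hb, ← EReal.coe_add, ← EReal.coe_add, EReal.coe_le_coe_iff]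
    have hVIz := hVI z hz
    have hexp : (x - z) ⬝ᵥ (M *ᵥ (x - z)) =
        (x - p) ⬝ᵥ (M *ᵥ (x - p)) - 2 * 1 * ((x - p) ⬝ᵥ (M *ᵥ (z - p))) +
          1 ^ 2 * ((z - p) ⬝ᵥ (M *ᵥ (z - p))) := by
      rw [← qform_sub M hM (x - p) (z - p) 1]
      norm_num
    have hpsd := hMpsd (z - p)
    rw [hexp]
    nlinarith

lemma euNorm_neg {n : ℕ} (x : Fin n → ℝ) : euNorm (-x) = euNorm x := by
  simp [euNorm, neg_dotProduct, dotProduct_neg]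

lemma dot_sub_smul {n : ℕ} (a b : Fin n → ℝ) (t : ℝ) :
    (a - t • b) ⬝ᵥ (a - t • b) = a ⬝ᵥ a - 2 * t * (a ⬝ᵥ b) + t ^ 2 * (b ⬝ᵥ b) := by
  simpa [Matrix.one_mulVec] using qform_sub (1 : Matrix (Fin n) (Fin n) ℝ)
    Matrix.transpose_one a b t

section schur
variable {N r : ℕ}
  (P : Matrix (Fin N) (Fin N) ℝ) (hP : P.PosDef)
  (U : Matrix (Fin N) (Fin r) ℝ)
  (hU : Function.Injective (U.mulVec))
  (S : Matrix (Fin N) (Fin N) ℝ) (hS : S.PosSemidef) (hSsq : S * S = P)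
  (V : Matrix (Fin N) (Fin N) ℝ) (hV : V = P - U * Uᵀ) (hVpd : V.PosDef)

include hP hSsq in
lemma S_det : IsUnit S.det := by
  have h1 : S.det * S.det = P.det := by rw [← det_mul, hSsq]
  have h2 : 0 < P.det := hP.det_pos
  have : S.det ≠ 0 := by intro h; rw [h, mul_zero] at h1; linarith
  exact this.isUnit

include hS in
lemma S_symm : Sᵀ = S := by
  have := hS.1
  rwa [Matrix.IsHermitian, conjTranspose_eq_transpose_of_trivial] at this

include hP hSsq hS in
lemma euNorm_SinvU_sq (v : Fin r → ℝ) :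
    euNorm ((S⁻¹ * U) *ᵥ v) ^ 2 = (U *ᵥ v) ⬝ᵥ (P⁻¹ *ᵥ (U *ᵥ v)) := by
  rw [euNorm_sq, ← Matrix.mulVec_mulVec, dot_mulVec_swap, Matrix.transpose_nonsing_inv,
    S_symm S hS, Matrix.mulVec_mulVec, ← Matrix.mul_inv_rev, hSsq, dotProduct_comm]

include hP hU hS hSsq hV hVpd in
lemma strict_contraction {v : Fin r → ℝ} (hv : v ≠ 0) :
    euNorm ((S⁻¹ * U) *ᵥ v) < euNorm v := by
  have hUv : U *ᵥ v ≠ 0 := by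
    intro hc
    exact hv (hU (by rw [hc]; simp [Matrix.mulVec_zero]))
  set t : ℝ := (U *ᵥ v) ⬝ᵥ (P⁻¹ *ᵥ (U *ᵥ v)) with ht
  have htpos : 0 < t := posdef_apply hP.inv hUv
  set y : Fin N → ℝ := P⁻¹ *ᵥ (U *ᵥ v) with hy
  have hPy : P *ᵥ y = U *ᵥ v := by
    rw [hy, Matrix.mulVec_mulVec, Matrix.mul_nonsing_inv _ hP.det_pos.ne'.isUnit, Matrix.one_mulVec]
  have hyV : 0 < y ⬝ᵥ (V *ᵥ y) := by
    apply posdef_apply hVpd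
    intro hy0
    have h0 : t = 0 := by rw [ht, hy0, dotProduct_zero]
    linarith
  have hyP : y ⬝ᵥ (P *ᵥ y) = t := by
    rw [hPy, ht, dotProduct_comm]
  have hyQ : y ⬝ᵥ ((U * Uᵀ) *ᵥ y) = (Uᵀ *ᵥ y) ⬝ᵥ (Uᵀ *ᵥ y) := by
    rw [← Matrix.mulVec_mulVec, dot_mulVec_swap]
  have hkey : euNorm (Uᵀ *ᵥ y) ^ 2 < t := by
    have : y ⬝ᵥ (V *ᵥ y) = y ⬝ᵥ (P *ᵥ y) - y ⬝ᵥ ((U * Uᵀ) *ᵥ y) := by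
      rw [hV, Matrix.sub_mulVec, dotProduct_sub]
    rw [this, hyP, hyQ] at hyV
    rw [euNorm_sq]; linarith
  have htv : t = v ⬝ᵥ (Uᵀ *ᵥ y) := by
    rw [dot_mulVec_swap, Matrix.transpose_transpose, ht, dotProduct_comm]
  have hcs : t ≤ euNorm v * euNorm (Uᵀ *ᵥ y) := by
    rw [htv]; exact dot_le_euNorm _ _
  have ha : euNorm ((S⁻¹ * U) *ᵥ v) ^ 2 = t := euNorm_SinvU_sq P hP U S hS hSsq v
  have hb : euNorm (Uᵀ *ᵥ y) < euNorm ((S⁻¹ * U) *ᵥ v) := by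
    nlinarith [euNorm_nonneg (Uᵀ *ᵥ y), euNorm_nonneg ((S⁻¹ * U) *ᵥ v)]
  have hapos : 0 < euNorm ((S⁻¹ * U) *ᵥ v) := by
    nlinarith [euNorm_nonneg ((S⁻¹ * U) *ᵥ v)]
  by_contra hcon
  push_neg at hcon
  have h1 : euNorm v * euNorm (Uᵀ *ᵥ y) ≤ euNorm ((S⁻¹ * U) *ᵥ v) * euNorm (Uᵀ *ᵥ y) :=
    mul_le_mul_of_nonneg_right hcon (euNorm_nonneg _)
  have h2 : euNorm ((S⁻¹ * U) *ᵥ v) * euNorm (Uᵀ *ᵥ y) <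
      euNorm ((S⁻¹ * U) *ᵥ v) * euNorm ((S⁻¹ * U) *ᵥ v) :=
    mul_lt_mul_of_pos_left hb hapos
  nlinarith
end schur
set_option maxHeartbeats 2000000 in
/-- Proximity operator in the metric `V = P - U Uᵀ` (assumed SPD):
`‖P^{-1/2}U‖² < 1`, and the map `L(α) = Uᵀ(x - prox^P_h(x + P⁻¹ U α)) + α` is
Lipschitz with constant `1 + ‖P^{-1/2} U‖²`, strongly monotone with modulus
`c = 1 - ‖P^{-1/2} U‖² > 0`, has a unique zero `α*`, and
`prox^V_h(x) = prox^P_h(x + P⁻¹ U α*)`.  (`S` is the principal square root of `P`.) -/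
theorem stmt_3 {N r : ℕ} (hr : r ≤ N)
    (h : (Fin N → ℝ) → EReal) (hh : Gamma0 h)
    (P : Matrix (Fin N) (Fin N) ℝ) (hP : P.PosDef)
    (U : Matrix (Fin N) (Fin r) ℝ)
    (hU : LinearIndependent ℝ (fun j : Fin r => fun i : Fin N => U i j))
    (S : Matrix (Fin N) (Fin N) ℝ) (hS : S.PosSemidef) (hSsq : S * S = P)
    (V : Matrix (Fin N) (Fin N) ℝ) (hV : V = P - U * Uᵀ) (hVpd : V.PosDef)
    (proxP : (Fin N → ℝ) → (Fin N → ℝ))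
    (hproxP : ∀ w : Fin N → ℝ, IsProxPt P h w (proxP w))
    (x : Fin N → ℝ)
    (L : (Fin r → ℝ) → (Fin r → ℝ))
    (hL : ∀ α : Fin r → ℝ, L α = Uᵀ *ᵥ (x - proxP (x + P⁻¹ *ᵥ (U *ᵥ α))) + α) :
    matOpNorm (S⁻¹ * U) ^ 2 < 1 ∧
    (∀ α β : Fin r → ℝ,
        euNorm (L α - L β) ≤ (1 + matOpNorm (S⁻¹ * U) ^ 2) * euNorm (α - β)) ∧
    (∀ α β : Fin r → ℝ,
        (L α - L β) ⬝ᵥ (α - β) ≥ (1 - matOpNorm (S⁻¹ * U) ^ 2) * ((α - β) ⬝ᵥ (α - β))) ∧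
    (∃! αs : Fin r → ℝ, L αs = 0) ∧
    (∀ αs : Fin r → ℝ, L αs = 0 →
        IsProxPt V h x (proxP (x + P⁻¹ *ᵥ (U *ᵥ αs)))) := by
  -- basic symmetric/invertibility facts
  have hPt : Pᵀ = P := by
    have := hP.1
    rwa [Matrix.IsHermitian, conjTranspose_eq_transpose_of_trivial] at this
  have hPpsd : ∀ v, 0 ≤ v ⬝ᵥ (P *ᵥ v) := possemidef_apply hP.posSemidef
  have hPdet : IsUnit P.det := hP.det_pos.ne'.isUnit
  have hSt : Sᵀ = S := S_symm S hS
  have hSdet : IsUnit S.det := S_det P hP S hSsq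
  have hPinvT : (P⁻¹)ᵀ = P⁻¹ := by rw [Matrix.transpose_nonsing_inv, hPt]
  have hPinvdot : ∀ b q : Fin N → ℝ, (P⁻¹ *ᵥ b) ⬝ᵥ (P *ᵥ q) = b ⬝ᵥ q := by
    intro b q
    rw [dotProduct_comm, dot_mulVec_swap, hPinvT, Matrix.mulVec_mulVec,
      Matrix.nonsing_inv_mul _ hPdet, Matrix.one_mulVec, dotProduct_comm]
  have hUinj : Function.Injective U.mulVec := by
    have h0 : ∀ v : Fin r → ℝ, U *ᵥ v = 0 → v = 0 := by
      intro v hv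
      have hsum : ∑ j, v j • (fun i => U i j) = (0 : Fin N → ℝ) := by
        funext i
        have hvi := congrFun hv i
        simp only [Matrix.mulVec, dotProduct] at hvi
        simpa [Finset.sum_apply, mul_comm] using hvi
      have := Fintype.linearIndependent_iff.mp hU v hsum
      funext j; exact this j
    intro a b hab
    have hsub : U *ᵥ (a - b) = 0 := by rw [Matrix.mulVec_sub, hab, sub_self]
    exact sub_eq_zero.mp (h0 _ hsub)
  set γ : ℝ := matOpNorm (S⁻¹ * U) with hγ
  have hγ0 : 0 ≤ γ := matOpNorm_nonneg _
  -- Part 1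
  have part1 : γ ^ 2 < 1 := by
    rcases Nat.eq_zero_or_pos r with hr0 | hrpos
    · have hz : γ = 0 := by
        rw [hγ, matOpNorm]
        apply le_antisymm _ (norm_nonneg _)
        apply ContinuousLinearMap.opNorm_le_bound _ le_rfl
        intro z
        have hz0 : z = 0 := by
          subst hr0
          exact Subsingleton.elim (α := EuclideanSpace ℝ (Fin 0)) z 0
        rw [hz0]; simp
      rw [hz]; norm_num
    · obtain ⟨v₀, hv1, hv2⟩ := matOpNorm_attained hrpos (S⁻¹ * U)
      have hv0 : v₀ ≠ 0 := by
        intro hc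
        rw [hc] at hv1
        simp [euNorm, dotProduct] at hv1
      have hlt := strict_contraction P hP U hUinj S hS hSsq V hV hVpd hv0
      rw [hv2, hv1] at hlt
      nlinarith
  -- Firm nonexpansiveness of proxP in the P metric
  have hfirm : ∀ w1 w2 : Fin N → ℝ,
      (proxP w1 - proxP w2) ⬝ᵥ (P *ᵥ (proxP w1 - proxP w2)) ≤
        (w1 - w2) ⬝ᵥ (P *ᵥ (proxP w1 - proxP w2)) := by
    intro w1 w2
    set p1 := proxP w1
    set p2 := proxP w2
    have h1 := prox_VI hh hPt hPpsd (hproxP w1) p2 (prox_ne_top hh (hproxP w2))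
    have h2 := prox_VI hh hPt hPpsd (hproxP w2) p1 (prox_ne_top hh (hproxP w1))
    have hneg : (w1 - p1) ⬝ᵥ (P *ᵥ (p2 - p1)) = -((w1 - p1) ⬝ᵥ (P *ᵥ (p1 - p2))) := by
      rw [show p2 - p1 = -(p1 - p2) from (neg_sub _ _).symm, Matrix.mulVec_neg,
        dotProduct_neg]
    rw [hneg] at h1
    have hexp : (w1 - w2) ⬝ᵥ (P *ᵥ (p1 - p2)) - (p1 - p2) ⬝ᵥ (P *ᵥ (p1 - p2)) =
        (w1 - p1) ⬝ᵥ (P *ᵥ (p1 - p2)) - (w2 - p2) ⬝ᵥ (P *ᵥ (p1 - p2)) := by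
      rw [← sub_dotProduct, ← sub_dotProduct]
      congr 1
      abel
    linarith
  -- key estimates
  have hkey : ∀ α β : Fin r → ℝ,
      (1 - γ ^ 2) * ((α - β) ⬝ᵥ (α - β)) ≤ (L α - L β) ⬝ᵥ (α - β) ∧
      euNorm (L α - L β) ≤ (1 + γ ^ 2) * euNorm (α - β) := by
    intro α β
    set d : Fin r → ℝ := α - β with hd
    set pα : Fin N → ℝ := proxP (x + P⁻¹ *ᵥ (U *ᵥ α)) with hpα
    set pβ : Fin N → ℝ := proxP (x + P⁻¹ *ᵥ (U *ᵥ β)) with hpβ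
    set q : Fin N → ℝ := pα - pβ with hq
    have hLd : L α - L β = d - Uᵀ *ᵥ q := by
      rw [hL α, hL β]
      have h1 : Uᵀ *ᵥ (x - pα) - Uᵀ *ᵥ (x - pβ) = -(Uᵀ *ᵥ q) := by
        rw [← Matrix.mulVec_sub, show (x - pα) - (x - pβ) = -(pα - pβ) by abel,
          Matrix.mulVec_neg, hq]
      calc Uᵀ *ᵥ (x - pα) + α - (Uᵀ *ᵥ (x - pβ) + β)
          = (Uᵀ *ᵥ (x - pα) - Uᵀ *ᵥ (x - pβ)) + (α - β) := by abel
      _ = d - Uᵀ *ᵥ q := by rw [h1, hd]; abel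
    have hwdiff : (x + P⁻¹ *ᵥ (U *ᵥ α)) - (x + P⁻¹ *ᵥ (U *ᵥ β)) = P⁻¹ *ᵥ (U *ᵥ d) := by
      have h2 : (x + P⁻¹ *ᵥ (U *ᵥ α)) - (x + P⁻¹ *ᵥ (U *ᵥ β)) =
          P⁻¹ *ᵥ (U *ᵥ α) - P⁻¹ *ᵥ (U *ᵥ β) := by abel
      rw [h2, ← Matrix.mulVec_sub, ← Matrix.mulVec_sub]
    have hfirm' : q ⬝ᵥ (P *ᵥ q) ≤ (U *ᵥ d) ⬝ᵥ q := by
      have := hfirm (x + P⁻¹ *ᵥ (U *ᵥ α)) (x + P⁻¹ *ᵥ (U *ᵥ β))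
      rw [← hpα, ← hpβ, ← hq, hwdiff, hPinvdot] at this
      exact this
    have hqP : q ⬝ᵥ (P *ᵥ q) = euNorm (S *ᵥ q) ^ 2 := by
      rw [euNorm_sq]
      conv_rhs => rw [dot_mulVec_swap, hSt, Matrix.mulVec_mulVec, hSsq]
      exact dotProduct_comm _ _
    have hUfac : U = S * (S⁻¹ * U) := by
      rw [← Matrix.mul_assoc, Matrix.mul_nonsing_inv _ hSdet, Matrix.one_mul]
    have hUd_eq : q ⬝ᵥ (U *ᵥ d) = (S *ᵥ q) ⬝ᵥ ((S⁻¹ * U) *ᵥ d) := by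
      conv_lhs => rw [hUfac, ← Matrix.mulVec_mulVec]
      rw [dot_mulVec_swap, hSt]
    have hcs : (S *ᵥ q) ⬝ᵥ ((S⁻¹ * U) *ᵥ d) ≤ euNorm (S *ᵥ q) * (γ * euNorm d) := by
      calc (S *ᵥ q) ⬝ᵥ ((S⁻¹ * U) *ᵥ d) ≤ euNorm (S *ᵥ q) * euNorm ((S⁻¹ * U) *ᵥ d) :=
            dot_le_euNorm _ _
      _ ≤ euNorm (S *ᵥ q) * (γ * euNorm d) :=
            mul_le_mul_of_nonneg_left (mulVec_opNorm _ _) (euNorm_nonneg _)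
    have ha_le : euNorm (S *ᵥ q) ≤ γ * euNorm d := by
      have h3 : euNorm (S *ᵥ q) ^ 2 ≤ euNorm (S *ᵥ q) * (γ * euNorm d) := by
        rw [← hqP]
        calc q ⬝ᵥ (P *ᵥ q) ≤ (U *ᵥ d) ⬝ᵥ q := hfirm'
        _ = q ⬝ᵥ (U *ᵥ d) := dotProduct_comm _ _
        _ = (S *ᵥ q) ⬝ᵥ ((S⁻¹ * U) *ᵥ d) := hUd_eq
        _ ≤ _ := hcs
      rcases eq_or_lt_of_le (euNorm_nonneg (S *ᵥ q)) with h0 | h0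
      · rw [← h0]; exact mul_nonneg hγ0 (euNorm_nonneg d)
      · nlinarith
    have hq_Ud : q ⬝ᵥ (U *ᵥ d) ≤ γ ^ 2 * (d ⬝ᵥ d) := by
      rw [hUd_eq]
      calc (S *ᵥ q) ⬝ᵥ ((S⁻¹ * U) *ᵥ d) ≤ euNorm (S *ᵥ q) * (γ * euNorm d) := hcs
      _ ≤ (γ * euNorm d) * (γ * euNorm d) :=
            mul_le_mul_of_nonneg_right ha_le (mul_nonneg hγ0 (euNorm_nonneg d))
      _ = γ ^ 2 * (d ⬝ᵥ d) := by rw [← euNorm_sq d]; ring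
    constructor
    · have hged : (L α - L β) ⬝ᵥ d = d ⬝ᵥ d - q ⬝ᵥ (U *ᵥ d) := by
        rw [hLd, sub_dotProduct, dot_mulVec_swap U q d]
      rw [hged]
      linarith [hq_Ud]
    · -- Lipschitz bound
      have hUtq : euNorm (Uᵀ *ᵥ q) ≤ γ ^ 2 * euNorm d := by
        have hfac : Uᵀ *ᵥ q = (S⁻¹ * U)ᵀ *ᵥ (S *ᵥ q) := by
          rw [Matrix.mulVec_mulVec]
          congr 1
          rw [Matrix.transpose_mul, Matrix.transpose_nonsing_inv, hSt, Matrix.mul_assoc,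
            Matrix.nonsing_inv_mul _ hSdet, Matrix.mul_one]
        rw [hfac]
        calc euNorm ((S⁻¹ * U)ᵀ *ᵥ (S *ᵥ q)) ≤ γ * euNorm (S *ᵥ q) :=
              transpose_mulVec_opNorm _ _
        _ ≤ γ * (γ * euNorm d) := mul_le_mul_of_nonneg_left ha_le hγ0
        _ = γ ^ 2 * euNorm d := by ring
      rw [hLd, sub_eq_add_neg]
      calc euNorm (d + -(Uᵀ *ᵥ q)) ≤ euNorm d + euNorm (-(Uᵀ *ᵥ q)) := euNorm_triangle _ _
      _ = euNorm d + euNorm (Uᵀ *ᵥ q) := by rw [euNorm_neg]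
      _ ≤ euNorm d + γ ^ 2 * euNorm d := by linarith [hUtq]
      _ = (1 + γ ^ 2) * euNorm d := by ring
  have hmono := fun α β => (hkey α β).1
  have hlip := fun α β => (hkey α β).2
  refine ⟨part1, fun α β => hlip α β, fun α β => hmono α β, ?_, ?_⟩
  · -- existence and uniqueness of the zero
    clear hγ
    clear_value γ
    have hc : 0 < 1 - γ ^ 2 := by linarith
    set c : ℝ := 1 - γ ^ 2 with hcdef
    set Mc : ℝ := 1 + γ ^ 2 with hMdef
    have hM1 : 1 ≤ Mc := by nlinarith
    have hM0 : 0 < Mc := by linarith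
    set τ : ℝ := c / Mc ^ 2 with hτdef
    have hτ : 0 < τ := by positivity
    set k2 : ℝ := 1 - c ^ 2 / Mc ^ 2 with hk2def
    have hcM : c ≤ Mc := by nlinarith
    have hk2nn : 0 ≤ k2 := by
      rw [hk2def, sub_nonneg, div_le_one (by positivity)]
      nlinarith
    have hk2lt : k2 < 1 := by
      rw [hk2def]
      have : 0 < c ^ 2 / Mc ^ 2 := by positivity
      linarith
    set k : ℝ := Real.sqrt k2 with hkdef
    have hk0 : 0 ≤ k := Real.sqrt_nonneg _
    have hkk : k ^ 2 = k2 := Real.sq_sqrt hk2nn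
    have hk1 : k < 1 := by nlinarith
    set g0 : (Fin r → ℝ) → (Fin r → ℝ) := fun α => α - τ • L α with hg0
    have hest : ∀ α β : Fin r → ℝ, euNorm (g0 α - g0 β) ≤ k * euNorm (α - β) := by
      intro α β
      have hdiff : g0 α - g0 β = (α - β) - τ • (L α - L β) := by
        rw [hg0]
        simp only [smul_sub]
        abel
      have hdot : (g0 α - g0 β) ⬝ᵥ (g0 α - g0 β) =
          (α - β) ⬝ᵥ (α - β) - 2 * τ * ((L α - L β) ⬝ᵥ (α - β)) +
            τ ^ 2 * ((L α - L β) ⬝ᵥ (L α - L β)) := by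
        rw [hdiff, dot_sub_smul, dotProduct_comm (α - β) (L α - L β)]
      have hLL : (L α - L β) ⬝ᵥ (L α - L β) ≤ Mc ^ 2 * ((α - β) ⬝ᵥ (α - β)) := by
        have h1 := hlip α β
        have h2 := euNorm_nonneg (L α - L β)
        have h3 := euNorm_nonneg (α - β)
        have h4 := euNorm_sq (L α - L β)
        have h5 := euNorm_sq (α - β)
        nlinarith
      have hmo := hmono α β
      have hbound : (g0 α - g0 β) ⬝ᵥ (g0 α - g0 β) ≤ k2 * ((α - β) ⬝ᵥ (α - β)) := by
        have hqeq : 1 - 2 * τ * c + τ ^ 2 * Mc ^ 2 = k2 := by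
          rw [hτdef, hk2def]
          field_simp
          ring
        have hdd := dot_self_nonneg (α - β)
        calc (g0 α - g0 β) ⬝ᵥ (g0 α - g0 β) ≤
              (α - β) ⬝ᵥ (α - β) - 2 * τ * (c * ((α - β) ⬝ᵥ (α - β))) +
                τ ^ 2 * (Mc ^ 2 * ((α - β) ⬝ᵥ (α - β))) := by
              rw [hdot]
              have ht2 : 0 ≤ τ ^ 2 := sq_nonneg τ
              have h2τ : 0 ≤ 2 * τ := by linarith
              nlinarith [mul_le_mul_of_nonneg_left hLL ht2,
                mul_le_mul_of_nonneg_left hmo h2τ]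
        _ = (1 - 2 * τ * c + τ ^ 2 * Mc ^ 2) * ((α - β) ⬝ᵥ (α - β)) := by ring
        _ = k2 * ((α - β) ⬝ᵥ (α - β)) := by rw [hqeq]
      have := Real.sqrt_le_sqrt hbound
      rw [show Real.sqrt ((g0 α - g0 β) ⬝ᵥ (g0 α - g0 β)) = euNorm (g0 α - g0 β) from rfl] at this
      calc euNorm (g0 α - g0 β) ≤ Real.sqrt (k2 * ((α - β) ⬝ᵥ (α - β))) := this
      _ = k * euNorm (α - β) := by
          rw [Real.sqrt_mul hk2nn, hkdef]; rfl
    -- Banach fixed point on EuclideanSpace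
    set E := EuclideanSpace ℝ (Fin r)
    set g : E → E := fun v => toE (g0 ((WithLp.equiv 2 _) v)) with hg
    have hgsub : ∀ a b : E, g a - g b = toE (g0 ((WithLp.equiv 2 _) a) - g0 ((WithLp.equiv 2 _) b)) :=
      fun a b => rfl
    set K : NNReal := ⟨k, hk0⟩ with hK
    have hlipg : LipschitzWith K g := by
      apply LipschitzWith.of_dist_le_mul
      intro a b
      rw [dist_eq_norm, dist_eq_norm, hgsub a b, normE]
      have : a - b = toE ((WithLp.equiv 2 _) a - (WithLp.equiv 2 _) b) := rfl
      rw [this, normE]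
      exact hest _ _
    have hcontr : ContractingWith K g := by
      constructor
      · exact_mod_cast hk1
      · exact hlipg
    have hfix := hcontr.fixedPoint_isFixedPt
    set F : E := ContractingWith.fixedPoint g hcontr with hF
    have hfixF : g F = F := hfix
    have hLF : L ((WithLp.equiv 2 _) F) = 0 := by
      have h1 : g0 ((WithLp.equiv 2 _) F) = (WithLp.equiv 2 _) F := congrArg (WithLp.equiv 2 _) hfixF
      rw [hg0] at h1
      have h2 : τ • L ((WithLp.equiv 2 _) F) = 0 := by
        have := sub_eq_self.mp h1
        exact this
      rcases smul_eq_zero.mp h2 with h3 | h3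
      · exact absurd h3 (ne_of_gt hτ)
      · exact h3
    refine ⟨(WithLp.equiv 2 _) F, hLF, ?_⟩
    intro y hy
    have hmo := hmono y ((WithLp.equiv 2 _) F)
    rw [hy, hLF, sub_self, zero_dotProduct] at hmo
    have hdd := dot_self_nonneg (y - (WithLp.equiv 2 _) F)
    have h0 : (y - (WithLp.equiv 2 _) F) ⬝ᵥ (y - (WithLp.equiv 2 _) F) = 0 := by nlinarith
    have := dotProduct_self_eq_zero.mp h0
    exact sub_eq_zero.mp this
  · -- final prox claim
    intro αs hLαs
    have hfin : h (proxP (x + P⁻¹ *ᵥ (U *ᵥ αs))) ≠ ⊤ := prox_ne_top hh (hproxP _)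
    have hVt : Vᵀ = V := by
      have := hVpd.1
      rwa [Matrix.IsHermitian, conjTranspose_eq_transpose_of_trivial] at this
    apply VI_prox hh.2.1 hVt (possemidef_apply hVpd.posSemidef) hfin
    intro z hz
    have hVIz := prox_VI hh hPt hPpsd (hproxP (x + P⁻¹ *ᵥ (U *ᵥ αs))) z hz
    set p : Fin N → ℝ := proxP (x + P⁻¹ *ᵥ (U *ᵥ αs)) with hp
    have hα : αs = -(Uᵀ *ᵥ (x - p)) := by
      have h1 : Uᵀ *ᵥ (x - p) + αs = 0 := (hL αs).symm.trans hLαs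
      exact eq_neg_of_add_eq_zero_right h1
    have hsplit : (x + P⁻¹ *ᵥ (U *ᵥ αs)) - p = (x - p) + P⁻¹ *ᵥ (U *ᵥ αs) := by abel
    have hMsym : (U * Uᵀ)ᵀ = U * Uᵀ := by
      rw [Matrix.transpose_mul, Matrix.transpose_transpose]
    have e1 : ((x + P⁻¹ *ᵥ (U *ᵥ αs)) - p) ⬝ᵥ (P *ᵥ (z - p)) =
        (x - p) ⬝ᵥ (P *ᵥ (z - p)) + (U *ᵥ αs) ⬝ᵥ (z - p) := by
      rw [hsplit, add_dotProduct, hPinvdot]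
    have e2 : (U *ᵥ αs) ⬝ᵥ (z - p) = -((x - p) ⬝ᵥ ((U * Uᵀ) *ᵥ (z - p))) := by
      rw [hα, Matrix.mulVec_neg, neg_dotProduct]
      congr 1
      rw [Matrix.mulVec_mulVec]
      conv_rhs => rw [dot_mulVec_swap (U * Uᵀ) (x - p) (z - p), hMsym]
    have e3 : (x - p) ⬝ᵥ (V *ᵥ (z - p)) =
        (x - p) ⬝ᵥ (P *ᵥ (z - p)) - (x - p) ⬝ᵥ ((U * Uᵀ) *ᵥ (z - p)) := by
      rw [hV, Matrix.sub_mulVec, dotProduct_sub]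
    linarith [hVIz, e1, e2, e3]
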